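/- Let 0 < κ₁ < ⋯ < κₘ < x̄ and, for j = 1,…,J, let gⱼ : [0, x̄] → ℝ be continuous and affine on each interval [0,κ₁], [κ₁,κ₂], …, [κₘ₋₁,κₘ], [κₘ, x̄], and let πⱼ ∈ ℝ. If there exists a Borel probability measure μ on [0, x̄] whose support contains {0, κ₁, …, κₘ, x̄} and with ∫ gⱼ dμ = πⱼ for all j, then there exists a probability measure μ̂ supported exactly on {0, κ₁, …, κₘ, x̄} (i.e., a finite discrete measure giving positive mass to each of these m+2 points) with ∫ gⱼ dμ̂ = πⱼ for all j. -/

import Mathlib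

open MeasureTheory

namespace Stmt17Aux

noncomputable def e (m : ℕ) (κ : Fin (m + 2) → ℝ) : ℕ → ℝ := fun n =>
  if h : 0 < n ∧ n - 1 < m + 2 then κ ⟨n - 1, h.2⟩
  else if n = 0 then κ 0 - 1
  else κ (Fin.last (m + 1)) + ((n - (m + 2) : ℕ) : ℝ)

lemma e_eq (m : ℕ) (κ : Fin (m + 2) → ℝ) (i : Fin (m + 2)) :
    e m κ (i.val + 1) = κ i := by
  have h : 0 < i.val + 1 ∧ i.val + 1 - 1 < m + 2 := ⟨Nat.succ_pos _, by omega⟩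
  simp only [e, dif_pos h]
  congr 1

lemma e_strictMono {m : ℕ} {κ : Fin (m + 2) → ℝ} (hκ : StrictMono κ) :
    StrictMono (e m κ) := by
  apply strictMono_nat_of_lt_succ
  intro n
  rcases Nat.eq_zero_or_pos n with h0 | hpos
  · subst h0
    have h1 : (0:ℕ) < 1 ∧ 1 - 1 < m + 2 := ⟨by omega, by omega⟩
    simp only [e, dif_pos h1, dif_neg (by omega : ¬((0:ℕ) < 0 ∧ 0 - 1 < m + 2)), if_true]
    have : κ ⟨0, by omega⟩ = κ 0 := rfl
    rw [this]; linarith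
  · rcases lt_or_ge (n - 1) (m + 1) with hlt | hge
    · have h1 : 0 < n ∧ n - 1 < m + 2 := ⟨hpos, by omega⟩
      have h2 : 0 < n + 1 ∧ n + 1 - 1 < m + 2 := ⟨by omega, by omega⟩
      simp only [e, dif_pos h1, dif_pos h2]
      exact hκ (by simp [Fin.lt_def]; omega)
    · rcases Nat.eq_or_lt_of_le hge with heq | hgt
      · -- n - 1 = m + 1, n = m + 2
        have hn : n = m + 2 := by omega
        subst hn
        have h1 : 0 < m + 2 ∧ m + 2 - 1 < m + 2 := ⟨by omega, by omega⟩
        have h2 : ¬(0 < m + 3 ∧ m + 3 - 1 < m + 2) := by omega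
        simp only [e, dif_pos h1, dif_neg h2, if_neg (by omega : ¬(m + 3 = 0))]
        have : (⟨m + 2 - 1, h1.2⟩ : Fin (m + 2)) = Fin.last (m + 1) := Fin.ext (by simp)
        rw [this]
        have : ((m + 3 - (m + 2) : ℕ) : ℝ) = 1 := by norm_num
        rw [this]; linarith
      · -- n ≥ m + 3
        have h1 : ¬(0 < n ∧ n - 1 < m + 2) := by omega
        have h2 : ¬(0 < n + 1 ∧ n + 1 - 1 < m + 2) := by omega
        simp only [e, dif_neg h1, dif_neg h2, if_neg (by omega : ¬(n = 0)),
          if_neg (by omega : ¬(n + 1 = 0))]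
        have : ((n - (m + 2) : ℕ) : ℝ) < ((n + 1 - (m + 2) : ℕ) : ℝ) := by
          exact_mod_cast by omega
        linarith


noncomputable def hat (m : ℕ) (κ : Fin (m + 2) → ℝ) (n : ℕ) (x : ℝ) : ℝ :=
  max 0 (min ((x - e m κ n) / (e m κ (n + 1) - e m κ n))
             ((e m κ (n + 2) - x) / (e m κ (n + 2) - e m κ (n + 1))))

variable {m : ℕ} {κ : Fin (m + 2) → ℝ}

lemma hat_continuous (n : ℕ) : Continuous (hat m κ n) := by
  unfold hat
  exact continuous_const.max
    ((((continuous_id.sub continuous_const).div_const _)).min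
      ((continuous_const.sub continuous_id).div_const _))

lemma hat_nonneg (n : ℕ) (x : ℝ) : 0 ≤ hat m κ n x := le_max_left _ _

lemma hat_le_one (hκ : StrictMono κ) (n : ℕ) (x : ℝ) : hat m κ n x ≤ 1 := by
  have he := e_strictMono hκ
  have d1 : (0:ℝ) < e m κ (n + 1) - e m κ n := by
    have := he (by omega : n < n + 1); linarith
  have d2 : (0:ℝ) < e m κ (n + 2) - e m κ (n + 1) := by
    have := he (by omega : n + 1 < n + 2); linarith
  apply max_le (by norm_num)
  rcases le_total x (e m κ (n + 1)) with h | h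
  · exact le_trans (min_le_left _ _) (by rw [div_le_one d1]; linarith)
  · exact le_trans (min_le_right _ _) (by rw [div_le_one d2]; linarith)

lemma hat_zero_of_le (hκ : StrictMono κ) (n : ℕ) {x : ℝ} (hx : x ≤ e m κ n) :
    hat m κ n x = 0 := by
  have he := e_strictMono hκ
  have d1 : (0:ℝ) < e m κ (n + 1) - e m κ n := by
    have := he (by omega : n < n + 1); linarith
  apply max_eq_left
  exact le_trans (min_le_left _ _) (div_nonpos_of_nonpos_of_nonneg (by linarith) (by linarith))

lemma hat_zero_of_ge (hκ : StrictMono κ) (n : ℕ) {x : ℝ} (hx : e m κ (n + 2) ≤ x) :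
    hat m κ n x = 0 := by
  have he := e_strictMono hκ
  have d2 : (0:ℝ) < e m κ (n + 2) - e m κ (n + 1) := by
    have := he (by omega : n + 1 < n + 2); linarith
  apply max_eq_left
  exact le_trans (min_le_right _ _) (div_nonpos_of_nonpos_of_nonneg (by linarith) (by linarith))

lemma hat_right_interval (hκ : StrictMono κ) (n : ℕ) {x : ℝ}
    (h1 : e m κ (n + 1) ≤ x) (h2 : x ≤ e m κ (n + 2)) :
    hat m κ n x = (e m κ (n + 2) - x) / (e m κ (n + 2) - e m κ (n + 1)) := by
  have he := e_strictMono hκ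
  have d1 : (0:ℝ) < e m κ (n + 1) - e m κ n := by
    have := he (by omega : n < n + 1); linarith
  have d2 : (0:ℝ) < e m κ (n + 2) - e m κ (n + 1) := by
    have := he (by omega : n + 1 < n + 2); linarith
  have hB0 : 0 ≤ (e m κ (n + 2) - x) / (e m κ (n + 2) - e m κ (n + 1)) :=
    div_nonneg (by linarith) (by linarith)
  have hB1 : (e m κ (n + 2) - x) / (e m κ (n + 2) - e m κ (n + 1)) ≤ 1 := by
    rw [div_le_one d2]; linarith
  have hA : 1 ≤ (x - e m κ n) / (e m κ (n + 1) - e m κ n) := by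
    rw [le_div_iff₀ d1]; linarith
  unfold hat
  rw [min_eq_right (by linarith), max_eq_right hB0]

lemma hat_left_interval (hκ : StrictMono κ) (n : ℕ) {x : ℝ}
    (h1 : e m κ n ≤ x) (h2 : x ≤ e m κ (n + 1)) :
    hat m κ n x = (x - e m κ n) / (e m κ (n + 1) - e m κ n) := by
  have he := e_strictMono hκ
  have d1 : (0:ℝ) < e m κ (n + 1) - e m κ n := by
    have := he (by omega : n < n + 1); linarith
  have d2 : (0:ℝ) < e m κ (n + 2) - e m κ (n + 1) := by
    have := he (by omega : n + 1 < n + 2); linarith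
  have hA0 : 0 ≤ (x - e m κ n) / (e m κ (n + 1) - e m κ n) :=
    div_nonneg (by linarith) (by linarith)
  have hA1 : (x - e m κ n) / (e m κ (n + 1) - e m κ n) ≤ 1 := by
    rw [div_le_one d1]; linarith
  have hB : 1 ≤ (e m κ (n + 2) - x) / (e m κ (n + 2) - e m κ (n + 1)) := by
    rw [le_div_iff₀ d2]; linarith
  unfold hat
  rw [min_eq_left (by linarith), max_eq_right hA0]

lemma hat_node (hκ : StrictMono κ) (n : ℕ) : hat m κ n (e m κ (n + 1)) = 1 := by
  have he := e_strictMono hκ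
  have d2 : (0:ℝ) < e m κ (n + 2) - e m κ (n + 1) := by
    have := he (by omega : n + 1 < n + 2); linarith
  rw [hat_right_interval hκ n le_rfl (le_of_lt (he (by omega : n + 1 < n + 2)))]
  field_simp


lemma interp (hκ : StrictMono κ) (k : ℕ) (hk : k ≤ m) {x : ℝ}
    (hx1 : e m κ (k + 1) ≤ x) (hx2 : x ≤ e m κ (k + 2))
    (f : ℝ → ℝ) (α β : ℝ)
    (hf : ∀ y ∈ Set.Icc (e m κ (k + 1)) (e m κ (k + 2)), f y = α * y + β) :
    ∑ i : Fin (m + 2), hat m κ i x * f (κ i) = f x := by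
  have he := e_strictMono hκ
  set a : Fin (m + 2) := ⟨k, by omega⟩ with ha
  set b : Fin (m + 2) := ⟨k + 1, by omega⟩ with hb
  have hab : a ≠ b := by simp [ha, hb, Fin.ext_iff]
  have hzero : ∀ i ∈ (Finset.univ : Finset (Fin (m + 2))),
      i ∉ ({a, b} : Finset (Fin (m + 2))) → hat m κ i x * f (κ i) = 0 := by
    intro i _ hi
    simp only [Finset.mem_insert, Finset.mem_singleton] at hi
    push_neg at hi
    have hiv : (i : ℕ) ≠ k ∧ (i : ℕ) ≠ k + 1 := by
      constructor
      · intro h; exact hi.1 (Fin.ext h)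
      · intro h; exact hi.2 (Fin.ext h)
    rcases lt_or_ge (i : ℕ) k with h | h
    · have : e m κ ((i : ℕ) + 2) ≤ x :=
        le_trans (he.monotone (by omega : (i : ℕ) + 2 ≤ k + 1)) hx1
      rw [hat_zero_of_ge hκ _ this, zero_mul]
    · have h' : k + 2 ≤ (i : ℕ) := by omega
      have : x ≤ e m κ (i : ℕ) := le_trans hx2 (he.monotone h')
      rw [hat_zero_of_le hκ _ this, zero_mul]
  rw [← Finset.sum_subset (Finset.subset_univ ({a, b} : Finset (Fin (m + 2)))) hzero,
    Finset.sum_pair hab]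
  have hka : κ a = e m κ (k + 1) := (e_eq m κ a).symm
  have hkb : κ b = e m κ (k + 2) := (e_eq m κ b).symm
  have d2 : (0:ℝ) < e m κ (k + 2) - e m κ (k + 1) := by
    have := he (by omega : k + 1 < k + 2); linarith
  have hha : hat m κ (a : ℕ) x = (e m κ (k + 2) - x) / (e m κ (k + 2) - e m κ (k + 1)) :=
    hat_right_interval hκ k hx1 hx2
  have hhb : hat m κ (b : ℕ) x = (x - e m κ (k + 1)) / (e m κ (k + 2) - e m κ (k + 1)) :=
    hat_left_interval hκ (k + 1) hx1 hx2
  rw [hha, hhb, hka, hkb,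
    hf _ ⟨le_rfl, by linarith⟩, hf _ ⟨by linarith, le_rfl⟩, hf x ⟨hx1, hx2⟩]
  field_simp
  ring

lemma cover (hκ : StrictMono κ) {x : ℝ}
    (hx1 : κ 0 ≤ x) (hx2 : x ≤ κ (Fin.last (m + 1))) :
    ∃ k ≤ m, e m κ (k + 1) ≤ x ∧ x ≤ e m κ (k + 2) := by
  classical
  have he0 : e m κ 1 = κ 0 := e_eq m κ 0
  have helast : e m κ (m + 2) = κ (Fin.last (m + 1)) := by
    have := e_eq m κ (Fin.last (m + 1))
    simpa using this
  have hP0 : e m κ (0 + 1) ≤ x := by simpa [he0] using hx1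
  set k := Nat.findGreatest (fun n => e m κ (n + 1) ≤ x) m with hk
  have hkle : k ≤ m := Nat.findGreatest_le m
  refine ⟨k, hkle, ?_, ?_⟩
  · exact Nat.findGreatest_spec (P := fun n => e m κ (n + 1) ≤ x) (Nat.zero_le m) hP0
  · rcases eq_or_lt_of_le hkle with heq | hlt
    · rw [heq, helast]; exact hx2
    · have hng := Nat.findGreatest_is_greatest (P := fun n => e m κ (n + 1) ≤ x) (Nat.lt_succ_self k) (by omega : k + 1 ≤ m)
      have hlt2 := lt_of_not_ge hng
      simpa [show k.succ + 1 = k + 2 from rfl] using hlt2.le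

end Stmt17Aux

open Stmt17Aux in
/-- If a probability measure on [0, x̄] whose support contains the breakpoints
0 = κ₀ < κ₁ < ⋯ < κₘ < κₘ₊₁ = x̄ reproduces the prices of finitely many payoffs
that are continuous and piecewise affine between consecutive breakpoints, then a
discrete measure supported exactly on the breakpoints reproduces the same prices. -/
theorem stmt17 (m J : ℕ) (xbar : ℝ) (κ : Fin (m + 2) → ℝ) (hκ : StrictMono κ)
    (h0 : κ 0 = 0) (hlast : κ (Fin.last (m + 1)) = xbar)
    (g : Fin J → ℝ → ℝ) (hgc : ∀ j, ContinuousOn (g j) (Set.Icc 0 xbar))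
    (hgaff : ∀ (j : Fin J) (i : Fin (m + 1)), ∃ α β : ℝ,
      ∀ x ∈ Set.Icc (κ i.castSucc) (κ i.succ), g j x = α * x + β)
    (π : Fin J → ℝ)
    (μ : Measure ℝ) [IsProbabilityMeasure μ]
    (hμbox : μ (Set.Icc 0 xbar)ᶜ = 0)
    (hsupport : ∀ (i : Fin (m + 2)) (ε : ℝ), 0 < ε → 0 < μ (Metric.ball (κ i) ε))
    (hint : ∀ j, ∫ x, g j x ∂μ = π j) :
    ∃ p : Fin (m + 2) → ℝ, (∀ i, 0 < p i) ∧ (∑ i, p i) = 1 ∧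
      ∀ j, (∑ i, p i * g j (κ i)) = π j := by
  classical
  have hinteg : ∀ n : ℕ, Integrable (hat m κ n) μ := by
    intro n
    refine (integrable_const (1:ℝ)).mono' (hat_continuous n).aestronglyMeasurable ?_
    filter_upwards with x
    rw [Real.norm_eq_abs, abs_le]
    exact ⟨by linarith [hat_nonneg (m := m) (κ := κ) n x], hat_le_one hκ n x⟩
  have hae : ∀ (f₁ f₂ : ℝ → ℝ), (∀ x ∈ Set.Icc (0:ℝ) xbar, f₁ x = f₂ x) →
      f₁ =ᵐ[μ] f₂ := by
    intro f₁ f₂ h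
    have hsub : {x | f₁ x = f₂ x}ᶜ ⊆ (Set.Icc (0:ℝ) xbar)ᶜ := by
      intro x hx
      simp only [Set.mem_compl_iff, Set.mem_setOf_eq] at hx ⊢
      intro hmem
      exact hx (h x hmem)
    exact mem_ae_iff.2 (measure_mono_null hsub hμbox)
  have hinterp : ∀ (f : ℝ → ℝ),
      (∀ i : Fin (m + 1), ∃ α β : ℝ,
        ∀ x ∈ Set.Icc (κ i.castSucc) (κ i.succ), f x = α * x + β) →
      ∀ x ∈ Set.Icc (0:ℝ) xbar, (∑ i : Fin (m + 2), hat m κ i x * f (κ i)) = f x := by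
    intro f hf x hx
    have hxa : κ 0 ≤ x := by rw [h0]; exact hx.1
    have hxb : x ≤ κ (Fin.last (m + 1)) := by rw [hlast]; exact hx.2
    obtain ⟨k, hk, h1, h2⟩ := cover hκ hxa hxb
    obtain ⟨α, β, haff⟩ := hf ⟨k, by omega⟩
    have hc1 : κ ((⟨k, by omega⟩ : Fin (m + 1)).castSucc) = e m κ (k + 1) :=
      (e_eq m κ _).symm
    have hc2 : κ ((⟨k, by omega⟩ : Fin (m + 1)).succ) = e m κ (k + 2) := by
      rw [← e_eq m κ (⟨k, by omega⟩ : Fin (m + 1)).succ]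
      rfl
    rw [hc1, hc2] at haff
    exact interp hκ k hk h1 h2 f α β haff
  refine ⟨fun i => ∫ x, hat m κ i x ∂μ, ?_, ?_, ?_⟩
  · intro i
    have h1 : hat m κ (i : ℕ) (κ i) = 1 := by
      have := hat_node hκ (i : ℕ)
      rwa [e_eq m κ i] at this
    obtain ⟨ε, hε, hball⟩ : ∃ ε > 0, ∀ y ∈ Metric.ball (κ i) ε,
        (1/2 : ℝ) < hat m κ (i : ℕ) y := by
      have hopen : IsOpen {y | (1/2 : ℝ) < hat m κ (i : ℕ) y} :=
        isOpen_lt continuous_const (hat_continuous (i : ℕ))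
      have hmem : κ i ∈ {y | (1/2 : ℝ) < hat m κ (i : ℕ) y} := by
        rw [Set.mem_setOf_eq, h1]; norm_num
      obtain ⟨ε, hε, hsub⟩ := Metric.isOpen_iff.1 hopen _ hmem
      exact ⟨ε, hε, fun y hy => hsub hy⟩
    have hμb := hsupport i ε hε
    have hind : Integrable ((Metric.ball (κ i) ε).indicator (fun _ => (1/2 : ℝ))) μ :=
      (integrable_const _).indicator Metric.isOpen_ball.measurableSet
    have hmono : ∀ x, (Metric.ball (κ i) ε).indicator (fun _ => (1/2:ℝ)) x
        ≤ hat m κ (i : ℕ) x := by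
      intro x
      by_cases hx : x ∈ Metric.ball (κ i) ε
      · rw [Set.indicator_of_mem hx]; exact (hball x hx).le
      · rw [Set.indicator_of_notMem hx]; exact hat_nonneg _ x
    have hle := integral_mono hind (hinteg (i : ℕ)) hmono
    rw [integral_indicator_const _ Metric.isOpen_ball.measurableSet] at hle
    have hpos : 0 < (μ (Metric.ball (κ i) ε)).toReal :=
      ENNReal.toReal_pos (ne_of_gt hμb) (measure_ne_top μ _)
    have : (0:ℝ) < (μ (Metric.ball (κ i) ε)).toReal • (1/2 : ℝ) := by
      rw [smul_eq_mul]; positivity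
    rw [measureReal_def] at hle
    linarith
  · have haeq : (fun x => ∑ i : Fin (m + 2), hat m κ (i : ℕ) x) =ᵐ[μ] (fun _ => (1:ℝ)) := by
      apply hae
      intro x hx
      have := hinterp (fun _ => 1) (fun i => ⟨0, 1, fun y _ => by ring⟩) x hx
      simpa using this
    have hsum := integral_finset_sum (μ := μ) Finset.univ
      (f := fun (i : Fin (m + 2)) x => hat m κ (i : ℕ) x) (fun i _ => hinteg (i : ℕ))
    show (∑ i : Fin (m + 2), ∫ x, hat m κ (i : ℕ) x ∂μ) = 1
    rw [← hsum, integral_congr_ae haeq, integral_const]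
    simp
  · intro j
    calc (∑ i : Fin (m + 2), (∫ x, hat m κ (i : ℕ) x ∂μ) * g j (κ i))
        = ∑ i : Fin (m + 2), ∫ x, hat m κ (i : ℕ) x * g j (κ i) ∂μ :=
          Finset.sum_congr rfl fun i _ => (integral_mul_const _ _).symm
      _ = ∫ x, ∑ i : Fin (m + 2), hat m κ (i : ℕ) x * g j (κ i) ∂μ :=
          (integral_finset_sum (μ := μ) Finset.univ
            (f := fun (i : Fin (m + 2)) x => hat m κ (i : ℕ) x * g j (κ i))
            (fun i _ => (hinteg (i : ℕ)).mul_const _)).symm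
      _ = ∫ x, g j x ∂μ := integral_congr_ae (hae _ _ (hinterp (g j) (hgaff j)))
      _ = π j := hint j
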